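/- For every integer a and every n ≥ 1, the higher-order Bernoulli-type polynomials satisfy the difference equation Σ_{j=l}^{m} a_j · B_{n,a}^q(x+j) = n · B_{n-1,a-1}^q(x). -/

import Mathlib

open Polynomial PowerSeries

lemma expE_aux (j : ℚ) :
    (PowerSeries.mk fun n => ((n.factorial : ℚ)⁻¹) • (Polynomial.X + Polynomial.C j) ^ n)
      = (PowerSeries.mk fun n => ((n.factorial : ℚ)⁻¹) • (Polynomial.X : Polynomial ℚ) ^ n)
        * (PowerSeries.mk fun n => Polynomial.C (j ^ n / n.factorial)) := by
  refine PowerSeries.ext fun n => ?_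
  rw [PowerSeries.coeff_mk, PowerSeries.coeff_mul,
    Finset.Nat.sum_antidiagonal_eq_sum_range_succ_mk]
  simp only [PowerSeries.coeff_mk]
  rw [add_pow]
  rw [Finset.smul_sum]
  refine Finset.sum_congr rfl fun i hi => ?_
  rw [Finset.mem_range, Nat.lt_succ_iff] at hi
  have h1 : (i.factorial : ℚ) ≠ 0 := Nat.cast_ne_zero.mpr i.factorial_ne_zero
  have h2 : ((n - i).factorial : ℚ) ≠ 0 := Nat.cast_ne_zero.mpr (n - i).factorial_ne_zero
  have h3 : (n.factorial : ℚ) ≠ 0 := Nat.cast_ne_zero.mpr n.factorial_ne_zero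
  have lhs : (Polynomial.X ^ i * Polynomial.C j ^ (n-i) * ((n.choose i : ℕ) : Polynomial ℚ))
      = (j^(n-i) * ((n.choose i : ℕ) : ℚ)) • (Polynomial.X : Polynomial ℚ) ^ i := by
    rw [← Polynomial.C_pow, ← Polynomial.C_eq_natCast, Polynomial.smul_eq_C_mul,
      Polynomial.C_mul]
    ring
  have rhs : ((i.factorial : ℚ))⁻¹ • (Polynomial.X : Polynomial ℚ) ^ i
        * Polynomial.C (j^(n-i)/((n-i).factorial : ℚ))
      = ((i.factorial : ℚ)⁻¹ * (j^(n-i)/((n-i).factorial : ℚ)))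
        • (Polynomial.X : Polynomial ℚ) ^ i := by
    rw [Polynomial.smul_eq_C_mul, Polynomial.smul_eq_C_mul, Polynomial.C_mul]
    ring
  rw [lhs, rhs, smul_smul]
  congr 1
  rw [Nat.cast_choose ℚ hi]
  field_simp

/-- ∑_{j=l}^{m} a_j · B_{n,a}^q(x+j) = n · B_{n-1,a-1}^q(x) for every integer a and n ≥ 1. -/

theorem bernoulli_type_difference_equation
    (l m : ℤ) (hlm : l < m) (c : ℤ → ℚ)
    (hc0 : ∑ k ∈ Finset.Icc l m, c k = 0)
    (hc1 : ∑ k ∈ Finset.Icc l m, (k : ℚ) * c k = 1)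
    -- `J a = (t/Δ_q(t))^a`, where the indicator `Δ_q(t)` has coefficients
    -- `(∑_k c_k kⁿ)/n!`:
    (J : ℤ → PowerSeries ℚ)
    (hJ0 : J 0 = 1)
    (hJadd : ∀ a b : ℤ, J (a + b) = J a * J b)
    (hJ1 : J 1 * (PowerSeries.mk fun n =>
        (∑ k ∈ Finset.Icc l m, c k * (k : ℚ) ^ n) / (n.factorial : ℚ)) = PowerSeries.X)
    -- the higher-order Bernoulli-type polynomials `B a n = B_{n,a}^q`:
    (B : ℤ → ℕ → Polynomial ℚ)
    (hB : ∀ a : ℤ,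
      (PowerSeries.map (Polynomial.C : ℚ →+* Polynomial ℚ) (J a)) *
        (PowerSeries.mk fun n => ((n.factorial : ℚ)⁻¹) • (Polynomial.X : Polynomial ℚ) ^ n) =
      PowerSeries.mk fun n => ((n.factorial : ℚ)⁻¹) • B a n)
    (a : ℤ) (n : ℕ) (hn : 1 ≤ n) :
    ∑ j ∈ Finset.Icc l m, c j • (B a n).comp (Polynomial.X + Polynomial.C (j : ℚ)) =
      (n : ℚ) • B (a - 1) (n - 1) := by
  set E : PowerSeries (Polynomial ℚ) :=
    PowerSeries.mk fun n => ((n.factorial : ℚ)⁻¹) • (Polynomial.X : Polynomial ℚ) ^ n with hE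
  set Δ : PowerSeries ℚ := PowerSeries.mk fun n =>
      (∑ k ∈ Finset.Icc l m, c k * (k : ℚ) ^ n) / (n.factorial : ℚ) with hΔ
  have key : ∀ j : ℤ,
      (PowerSeries.map ((Polynomial.aeval (Polynomial.X + Polynomial.C (j:ℚ))).toRingHom :
          Polynomial ℚ →+* Polynomial ℚ)
        (PowerSeries.mk fun n => ((n.factorial : ℚ)⁻¹) • B a n))
      = (PowerSeries.map (Polynomial.C : ℚ →+* Polynomial ℚ) (J a)) * E
          * (PowerSeries.mk fun n => Polynomial.C ((j:ℚ) ^ n / n.factorial)) := by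
    intro j
    rw [← hB a, map_mul, mul_assoc]
    congr 1
    · refine PowerSeries.ext fun k => ?_
      simp only [PowerSeries.coeff_map, AlgHom.toRingHom_eq_coe, RingHom.coe_coe,
        Polynomial.aeval_C, Polynomial.algebraMap_eq]
    · rw [← expE_aux (j:ℚ)]
      refine PowerSeries.ext fun k => ?_
      simp only [hE, PowerSeries.coeff_map, PowerSeries.coeff_mk, AlgHom.toRingHom_eq_coe,
        RingHom.coe_coe, map_smul, map_pow, Polynomial.aeval_X]
  have hsum : (∑ j ∈ Finset.Icc l m, c j •
        (PowerSeries.mk fun n => Polynomial.C ((j:ℚ) ^ n / n.factorial)))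
      = PowerSeries.map (Polynomial.C : ℚ →+* Polynomial ℚ) Δ := by
    refine PowerSeries.ext fun k => ?_
    rw [map_sum]
    simp only [PowerSeries.coeff_smul, PowerSeries.coeff_mk, PowerSeries.coeff_map, hΔ]
    rw [Finset.sum_div, map_sum]
    refine Finset.sum_congr rfl fun j hj => ?_
    rw [Polynomial.smul_C]
    congr 1
    rw [smul_eq_mul]
    ring
  have sum_eq :
      (∑ j ∈ Finset.Icc l m, c j •
        (PowerSeries.map ((Polynomial.aeval (Polynomial.X + Polynomial.C (j:ℚ))).toRingHom :
            Polynomial ℚ →+* Polynomial ℚ)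
          (PowerSeries.mk fun n => ((n.factorial : ℚ)⁻¹) • B a n)))
      = (PowerSeries.map (Polynomial.C : ℚ →+* Polynomial ℚ) (J a)) * E
          * (PowerSeries.map (Polynomial.C : ℚ →+* Polynomial ℚ) Δ) := by
    rw [← hsum, Finset.mul_sum]
    refine Finset.sum_congr rfl fun j _ => ?_
    rw [key j, mul_smul_comm]
  have hJaΔ : J a * Δ = J (a - 1) * PowerSeries.X := by
    have h : J a = J (a - 1) * J 1 := by rw [← hJadd]; norm_num
    rw [h, mul_assoc, hJ1]
  have sum_eq2 :
      (∑ j ∈ Finset.Icc l m, c j •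
        (PowerSeries.map ((Polynomial.aeval (Polynomial.X + Polynomial.C (j:ℚ))).toRingHom :
            Polynomial ℚ →+* Polynomial ℚ)
          (PowerSeries.mk fun n => ((n.factorial : ℚ)⁻¹) • B a n)))
      = PowerSeries.X * (PowerSeries.mk fun n => ((n.factorial : ℚ)⁻¹) • B (a-1) n) := by
    rw [sum_eq, mul_assoc, mul_comm E, ← mul_assoc, ← map_mul, hJaΔ, map_mul,
      PowerSeries.map_X, mul_comm ((PowerSeries.map (Polynomial.C : ℚ →+* Polynomial ℚ))
        (J (a-1))) PowerSeries.X, mul_assoc, hB (a-1)]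
  have hcoeff := congrArg (PowerSeries.coeff (R := Polynomial ℚ) n) sum_eq2
  obtain ⟨n, rfl⟩ : ∃ k, n = k + 1 := ⟨n - 1, (Nat.succ_pred_eq_of_pos hn).symm⟩
  rw [map_sum, PowerSeries.coeff_succ_X_mul] at hcoeff
  simp only [PowerSeries.coeff_smul, PowerSeries.coeff_map, PowerSeries.coeff_mk,
    AlgHom.toRingHom_eq_coe, RingHom.coe_coe, map_smul] at hcoeff
  have hcomp : ∀ j : ℤ, (Polynomial.aeval (Polynomial.X + Polynomial.C (j:ℚ))) (B a (n+1))
      = (B a (n+1)).comp (Polynomial.X + Polynomial.C (j:ℚ)) :=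
    fun j => (Polynomial.comp_eq_aeval).symm
  simp only [hcomp, smul_smul] at hcoeff
  have hfac : ((n+1).factorial : ℚ) ≠ 0 := Nat.cast_ne_zero.mpr (n+1).factorial_ne_zero
  have hfac2 : (n.factorial : ℚ) ≠ 0 := Nat.cast_ne_zero.mpr n.factorial_ne_zero
  have hgoal : ∑ j ∈ Finset.Icc l m,
      c j • (B a (n+1)).comp (Polynomial.X + Polynomial.C (j:ℚ))
      = ((n+1).factorial : ℚ) • ((n.factorial : ℚ)⁻¹ • B (a-1) n) := by
    rw [← hcoeff, Finset.smul_sum]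
    refine Finset.sum_congr rfl fun j _ => ?_
    rw [smul_smul]
    congr 1
    field_simp
  rw [Nat.add_sub_cancel, hgoal, smul_smul]
  congr 1
  rw [Nat.factorial_succ]
  push_cast
  field_simp
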